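/- Kruskal's theorem for labelled trees (KT_ℓ(ω)): for every well quasi-order (Q, ≤_Q), the set T(Q) of finite rooted ordered trees with labels in Q, quasi-ordered by the embeddability relation ⪯, is a well quasi-order. -/

import Mathlib

/-- Finite rooted ordered trees (rose trees) with labels in `Q`. -/
inductive RoseTree (Q : Type) : Type
  | node : Q → List (RoseTree Q) → RoseTree Q

/-- The embeddability relation `⪯` on labelled trees: `t ⪯ node q ss` if `t`
embeds in some immediate subtree of `node q ss`, or the roots' labels are
related and the lists of immediate subtrees are related by a sublist-embedding. -/
inductive TreeEmb {Q : Type} (le : Q → Q → Prop) : RoseTree Q → RoseTree Q → Prop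
  | subtree {t : RoseTree Q} {q : Q} {ss : List (RoseTree Q)} {s : RoseTree Q} :
      s ∈ ss → TreeEmb le t s → TreeEmb le t (RoseTree.node q ss)
  | node {p q : Q} {ts ss : List (RoseTree Q)} :
      le p q → List.SublistForall₂ (TreeEmb le) ts ss →
      TreeEmb le (RoseTree.node p ts) (RoseTree.node q ss)

namespace RoseTree
def label {Q : Type} : RoseTree Q → Q
  | .node q _ => q

def children {Q : Type} : RoseTree Q → List (RoseTree Q)
  | .node _ ts => ts

theorem node_label_children {Q : Type} (t : RoseTree Q) : node t.label t.children = t := by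
  cases t; rfl

theorem size_lt_of_mem {Q : Type} {s : RoseTree Q} {q : Q} {ss : List (RoseTree Q)}
    (h : s ∈ ss) : sizeOf s < sizeOf (RoseTree.node q ss) := by
  have := List.sizeOf_lt_of_mem h
  simp only [node.sizeOf_spec]
  omega
end RoseTree

theorem sublistForall₂_refl_of_mem {α : Type*} {r : α → α → Prop} :
    ∀ {l : List α}, (∀ x ∈ l, r x x) → List.SublistForall₂ r l l
  | [], _ => List.SublistForall₂.nil
  | a :: l, h => List.SublistForall₂.cons (h a (List.mem_cons_self))
      (sublistForall₂_refl_of_mem fun x hx => h x (List.mem_cons_of_mem a hx))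

theorem sublistForall₂_comp {α : Type*} {r s t : α → α → Prop} :
    ∀ {bs cs : List α}, List.SublistForall₂ s bs cs →
    ∀ {as : List α}, List.SublistForall₂ r as bs →
    (∀ a ∈ as, ∀ b ∈ bs, ∀ c ∈ cs, r a b → s b c → t a c) →
    List.SublistForall₂ t as cs := by
  intro bs cs h2
  induction h2 with
  | nil =>
    intro as h1 _
    cases h1
    exact List.SublistForall₂.nil
  | @cons b c bs cs hbc hrest ih =>
    intro as h1 hcomp
    cases h1 with
    | nil => exact List.SublistForall₂.nil
    | @cons a _ as' _ hab h1' =>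
      exact List.SublistForall₂.cons
        (hcomp a (List.mem_cons_self) b (List.mem_cons_self) c (List.mem_cons_self) hab hbc)
        (ih h1' fun a' ha' b' hb' c' hc' => hcomp a' (List.mem_cons_of_mem _ ha')
          b' (List.mem_cons_of_mem _ hb') c' (List.mem_cons_of_mem _ hc'))
    | cons_right h1' =>
      exact List.SublistForall₂.cons_right (ih h1' fun a' ha' b' hb' c' hc' =>
        hcomp a' ha' b' (List.mem_cons_of_mem _ hb') c' (List.mem_cons_of_mem _ hc'))
  | @cons_right b bs cs hrest ih =>
    intro as h1 hcomp
    exact List.SublistForall₂.cons_right (ih h1 fun a' ha' b' hb' c' hc' =>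
      hcomp a' ha' b' hb' c' (List.mem_cons_of_mem _ hc'))

theorem sublistForall₂_mem {α : Type*} {r : α → α → Prop} {as bs : List α}
    (h : List.SublistForall₂ r as bs) {a : α} (ha : a ∈ as) : ∃ b ∈ bs, r a b := by
  induction h with
  | nil => exact absurd ha List.not_mem_nil
  | @cons x y as' bs' hxy _ ih =>
    rcases List.mem_cons.1 ha with rfl | ha'
    · exact ⟨y, List.mem_cons_self, hxy⟩
    · obtain ⟨b, hb, hab⟩ := ih ha'
      exact ⟨b, List.mem_cons_of_mem _ hb, hab⟩
  | @cons_right y bs' cs' _ ih =>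
    obtain ⟨b, hb, hab⟩ := ih ha
    exact ⟨b, List.mem_cons_of_mem _ hb, hab⟩


section
variable {Q : Type} {le : Q → Q → Prop}

theorem TreeEmb.refl (hrefl : Reflexive le) : ∀ t : RoseTree Q, TreeEmb le t t := by
  have key : ∀ (n : ℕ) (t : RoseTree Q), sizeOf t ≤ n → TreeEmb le t t := by
    intro n
    induction n with
    | zero =>
      intro t ht
      cases t with
      | node q ts => simp at ht
    | succ n ih =>
      intro t ht
      cases t with
      | node q ts =>
        exact TreeEmb.node (hrefl q) (sublistForall₂_refl_of_mem fun s hs =>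
          ih s (by have := RoseTree.size_lt_of_mem (q := q) hs; omega))
  exact fun t => key (sizeOf t) t le_rfl

theorem TreeEmb.trans (htrans : Transitive le) :
    ∀ a b c : RoseTree Q, TreeEmb le a b → TreeEmb le b c → TreeEmb le a c := by
  have key : ∀ (n : ℕ) (a b c : RoseTree Q), sizeOf b + sizeOf c ≤ n →
      TreeEmb le a b → TreeEmb le b c → TreeEmb le a c := by
    intro n
    induction n with
    | zero =>
      intro a b c hn
      cases b with
      | node q ts => simp at hn
    | succ n ih =>
      intro a b c hn h1 h2
      cases h2 with
      | @subtree _ q ss s hs h2' =>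
        exact TreeEmb.subtree hs (ih a b s
          (by have := RoseTree.size_lt_of_mem (q := q) hs; omega) h1 h2')
      | @node p q ts ss hpq hsub =>
        cases h1 with
        | @subtree _ _ _ t hts h1' =>
          obtain ⟨s, hsss, hts'⟩ := sublistForall₂_mem hsub hts
          refine TreeEmb.subtree hsss (ih a t s ?_ h1' hts')
          have h1 := RoseTree.size_lt_of_mem (q := p) hts
          have h2 := RoseTree.size_lt_of_mem (q := q) hsss
          omega
        | @node r _ as _ hrp hsub' =>
          refine TreeEmb.node (htrans hrp hpq) ?_
          refine sublistForall₂_comp hsub hsub' ?_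
          intro x _ y hy z hz hxy hyz
          refine ih x y z ?_ hxy hyz
          have h1 := RoseTree.size_lt_of_mem (q := p) hy
          have h2 := RoseTree.size_lt_of_mem (q := q) hz
          omega
  exact fun a b c h1 h2 => key (sizeOf b + sizeOf c) a b c le_rfl h1 h2

end

theorem RoseTree.sizeOf_lt_of_mem_children {Q : Type} {t s : RoseTree Q}
    (h : t ∈ s.children) : sizeOf t < sizeOf s := by
  conv_rhs => rw [← RoseTree.node_label_children s]
  exact RoseTree.size_lt_of_mem h


/-- Kruskal's theorem for labelled trees, KT_ℓ(ω): if `(Q, le)` is a well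
quasi-order, then the trees with labels in `Q` under embeddability form a
well quasi-order (every infinite sequence is good). -/
theorem kruskal_labelled {Q : Type} (le : Q → Q → Prop)
    (hrefl : Reflexive le) (htrans : Transitive le)
    (hwqo : ∀ q : ℕ → Q, ∃ i j : ℕ, i < j ∧ le (q i) (q j)) :
    ∀ f : ℕ → RoseTree Q, ∃ i j : ℕ, i < j ∧ TreeEmb le (f i) (f j) := by
  classical
  haveI : IsRefl Q le := ⟨hrefl⟩
  haveI : IsTrans Q le := ⟨fun _ _ _ h1 h2 => htrans h1 h2⟩
  haveI : IsRefl (RoseTree Q) (TreeEmb le) := ⟨TreeEmb.refl hrefl⟩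
  haveI : IsTrans (RoseTree Q) (TreeEmb le) := ⟨fun a b c => TreeEmb.trans htrans a b c⟩
  haveI : IsPreorder Q le := { refl := hrefl, trans := fun _ _ _ h1 h2 => htrans h1 h2 }
  haveI : IsPreorder (RoseTree Q) (TreeEmb le) :=
    { refl := TreeEmb.refl hrefl, trans := fun a b c => TreeEmb.trans htrans a b c }
  have H : (Set.univ : Set (RoseTree Q)).PartiallyWellOrderedOn (TreeEmb le) := by
    rw [Set.PartiallyWellOrderedOn.iff_not_exists_isMinBadSeq sizeOf]
    rintro ⟨f, hf, hmin⟩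
    set S : Set (RoseTree Q) := {t | ∃ n, t ∈ (f n).children} with hS
    have hSpwo : S.PartiallyWellOrderedOn (TreeEmb le) := by
      rw [Set.partiallyWellOrderedOn_iff_exists_lt]
      intro h hh
      by_contra hbad
      push_neg at hbad
      choose m hm using hh
      obtain ⟨v, ⟨k0, rfl⟩, hmin'⟩ :=
        (wellFounded_lt (α := ℕ)).has_min (Set.range m) ⟨m 0, 0, rfl⟩
      have hk0 : ∀ k, m k0 ≤ m k := fun k => not_lt.1 (hmin' (m k) ⟨k, rfl⟩)
      set N := m k0 with hN
      set g : ℕ → RoseTree Q := fun i => if i < N then f i else h (k0 + (i - N)) with hg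
      refine hmin N g (fun i hi => by simp [hg, if_pos hi]) ?_ ⟨fun _ => trivial, ?_⟩
      · have : g N = h k0 := by simp [hg]
        rw [this]
        exact RoseTree.sizeOf_lt_of_mem_children (hm k0)
      · intro i j hij hr
        by_cases hjN : j < N
        · have hiN : i < N := hij.trans hjN
          rw [hg] at hr; simp only [if_pos hiN, if_pos hjN] at hr
          exact hf.2 i j hij hr
        · by_cases hiN : i < N
          · rw [hg] at hr
            simp only [if_pos hiN, if_neg hjN] at hr
            set k := k0 + (j - N) with hk
            have h1 : TreeEmb le (f i) (f (m k)) := by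
              rw [← RoseTree.node_label_children (f (m k))]
              exact TreeEmb.subtree (hm k) hr
            exact hf.2 i (m k) (lt_of_lt_of_le hiN (hk0 k)) h1
          · rw [hg] at hr
            simp only [if_neg hiN, if_neg hjN] at hr
            exact hbad (k0 + (i - N)) (k0 + (j - N)) (by omega) hr
    have hL := Set.PartiallyWellOrderedOn.partiallyWellOrderedOn_sublistForall₂ (TreeEmb le) hSpwo
    have hQ : (Set.univ : Set Q).PartiallyWellOrderedOn le := fun q => hwqo (fun n => (q n).1)
    have hprod := Set.PartiallyWellOrderedOn.prod hQ hL
    obtain ⟨i, j, hij, hle, hsub⟩ := hprod.exists_lt (f := fun n => ((f n).label, (f n).children))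
      (fun n => ⟨trivial, fun x hx => ⟨n, hx⟩⟩)
    refine hf.2 i j hij ?_
    rw [← RoseTree.node_label_children (f i), ← RoseTree.node_label_children (f j)]
    exact TreeEmb.node hle hsub
  intro f
  obtain ⟨i, j, hij, hr⟩ := H.exists_lt (f := f) (fun _ => trivial)
  exact ⟨i, j, hij, hr⟩
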